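/- Let G be a graph, I a maximum independent set in G, M a maximum matching in the induced subgraph G[V(G) − I], and Y = V(G) − I − V(M). Then Y is an independent set, and the bipartite graph between Y and I contains a matching saturating Y. -/
import Mathlib


/-- Let I be a maximum independent set of G, M a maximum matching
of G[V − I], and Y = V − I − V(M). Then Y is independent and there is a matching
between Y and I saturating Y. -/
theorem stmt_15 {V : Type*} [Fintype V] [DecidableEq V]
    (G : SimpleGraph V)
    (I : Finset V)
    (hIindep : ∀ u ∈ I, ∀ v ∈ I, ¬ G.Adj u v)
    (hImax : ∀ J : Finset V, (∀ u ∈ J, ∀ v ∈ J, ¬ G.Adj u v) → J.card ≤ I.card)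
    (M : Finset (V × V))
    (hMadj : ∀ p ∈ M, G.Adj p.1 p.2 ∧ p.1 ∉ I ∧ p.2 ∉ I)
    (hMdisj : ∀ p ∈ M, ∀ q ∈ M, p ≠ q →
      Disjoint ({p.1, p.2} : Finset V) {q.1, q.2})
    (hMmax : ∀ M' : Finset (V × V),
      (∀ p ∈ M', G.Adj p.1 p.2 ∧ p.1 ∉ I ∧ p.2 ∉ I) →
      (∀ p ∈ M', ∀ q ∈ M', p ≠ q →
        Disjoint ({p.1, p.2} : Finset V) {q.1, q.2}) →
      M'.card ≤ M.card)
    (Y : Finset V)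
    (hY : Y = (Finset.univ \ I) \ (M.image Prod.fst ∪ M.image Prod.snd)) :
    (∀ u ∈ Y, ∀ v ∈ Y, ¬ G.Adj u v) ∧
    ∃ f : V → V, Set.InjOn f ↑Y ∧ ∀ y ∈ Y, f y ∈ I ∧ G.Adj y (f y) := by
  classical
  -- basic facts about Y
  have hYI : ∀ y ∈ Y, y ∉ I := by
    intro y hy
    rw [hY] at hy
    simp only [Finset.mem_sdiff, Finset.mem_univ] at hy
    exact hy.1.2
  have hYM1 : ∀ y ∈ Y, ∀ p ∈ M, y ≠ p.1 := by
    intro y hy p hp hne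
    rw [hY] at hy
    simp only [Finset.mem_sdiff, Finset.mem_union, Finset.mem_image] at hy
    exact hy.2 (Or.inl ⟨p, hp, hne.symm⟩)
  have hYM2 : ∀ y ∈ Y, ∀ p ∈ M, y ≠ p.2 := by
    intro y hy p hp hne
    rw [hY] at hy
    simp only [Finset.mem_sdiff, Finset.mem_union, Finset.mem_image] at hy
    exact hy.2 (Or.inr ⟨p, hp, hne.symm⟩)
  -- Part 1: Y is independent
  have part1 : ∀ u ∈ Y, ∀ v ∈ Y, ¬ G.Adj u v := by
    intro u hu v hv hadj
    have huvM : (u, v) ∉ M := fun h => hYM1 u hu (u, v) h rfl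
    have hcard : (insert (u, v) M).card = M.card + 1 := Finset.card_insert_of_notMem huvM
    have hle := hMmax (insert (u, v) M) ?_ ?_
    · omega
    · intro p hp
      rcases Finset.mem_insert.mp hp with h | h
      · subst h; exact ⟨hadj, hYI u hu, hYI v hv⟩
      · exact hMadj p h
    · intro p hp q hq hpq
      rcases Finset.mem_insert.mp hp with h | h <;>
        rcases Finset.mem_insert.mp hq with h' | h'
      · exact absurd (h.trans h'.symm) hpq
      · subst h
        simp only [Finset.disjoint_insert_left, Finset.disjoint_singleton_left,
          Finset.mem_insert, Finset.mem_singleton]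
        constructor
        · push_neg
          exact ⟨hYM1 u hu q h', hYM2 u hu q h'⟩
        · push_neg
          exact ⟨hYM1 v hv q h', hYM2 v hv q h'⟩
      · subst h'
        rw [disjoint_comm]
        simp only [Finset.disjoint_insert_left, Finset.disjoint_singleton_left,
          Finset.mem_insert, Finset.mem_singleton]
        constructor
        · push_neg
          exact ⟨hYM1 u hu p h, hYM2 u hu p h⟩
        · push_neg
          exact ⟨hYM1 v hv p h, hYM2 v hv p h⟩
      · exact hMdisj p h q h' hpq
  refine ⟨part1, ?_⟩
  -- Part 2: Hall's theorem
  set t : {y // y ∈ Y} → Finset V := fun y => I.filter (fun v => G.Adj y.1 v) with ht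
  have hall : ∀ s : Finset {y // y ∈ Y}, s.card ≤ (s.biUnion t).card := by
    intro s
    by_contra hlt
    push_neg at hlt
    set Γ := s.biUnion t with hΓ
    set U := s.image Subtype.val with hU
    have hUcard : U.card = s.card := Finset.card_image_of_injective s Subtype.val_injective
    have hUY : U ⊆ Y := by
      intro x hx
      rcases Finset.mem_image.mp hx with ⟨y, _, rfl⟩
      exact y.2
    have hΓI : Γ ⊆ I := by
      intro x hx
      rcases Finset.mem_biUnion.mp hx with ⟨y, _, hy⟩
      exact (Finset.mem_filter.mp hy).1
    have hdisjUI : Disjoint U I :=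
      Finset.disjoint_left.mpr fun x hx hxI => hYI x (hUY hx) hxI
    set J := (I \ Γ) ∪ U with hJ
    have hJindep : ∀ u ∈ J, ∀ v ∈ J, ¬ G.Adj u v := by
      intro u hu v hv hadj
      rcases Finset.mem_union.mp hu with hu' | hu' <;>
        rcases Finset.mem_union.mp hv with hv' | hv'
      · exact hIindep u (Finset.mem_sdiff.mp hu').1 v (Finset.mem_sdiff.mp hv').1 hadj
      · -- u ∈ I \ Γ, v ∈ U : then u ∈ Γ, contradiction
        rcases Finset.mem_image.mp hv' with ⟨y, hys, rfl⟩
        have : u ∈ Γ := Finset.mem_biUnion.mpr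
          ⟨y, hys, Finset.mem_filter.mpr ⟨(Finset.mem_sdiff.mp hu').1, hadj.symm⟩⟩
        exact (Finset.mem_sdiff.mp hu').2 this
      · rcases Finset.mem_image.mp hu' with ⟨y, hys, rfl⟩
        have : v ∈ Γ := Finset.mem_biUnion.mpr
          ⟨y, hys, Finset.mem_filter.mpr ⟨(Finset.mem_sdiff.mp hv').1, hadj⟩⟩
        exact (Finset.mem_sdiff.mp hv').2 this
      · exact part1 u (hUY hu') v (hUY hv') hadj
    have hJcard : J.card = (I \ Γ).card + U.card := by
      apply Finset.card_union_of_disjoint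
      exact Finset.disjoint_left.mpr fun x hx hxU =>
        hYI x (hUY hxU) (Finset.mem_sdiff.mp hx).1
    have hIG : (I \ Γ).card = I.card - Γ.card := by
      rw [Finset.card_sdiff_of_subset hΓI]
    have hΓle : Γ.card ≤ I.card := Finset.card_le_card hΓI
    have : I.card < J.card := by
      rw [hJcard, hIG, hUcard]; omega
    have := hImax J hJindep
    omega
  obtain ⟨f, hfinj, hft⟩ := (Finset.all_card_le_biUnion_card_iff_existsInjective' t).mp hall
  refine ⟨fun v => if h : v ∈ Y then f ⟨v, h⟩ else v, ?_, ?_⟩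
  · intro a ha b hb hab
    have ha' : a ∈ Y := ha
    have hb' : b ∈ Y := hb
    simp only [dif_pos ha', dif_pos hb'] at hab
    exact congrArg Subtype.val (hfinj hab)
  · intro y hy
    simp only [dif_pos hy]
    have := hft ⟨y, hy⟩
    rw [ht] at this
    exact ⟨(Finset.mem_filter.mp this).1, (Finset.mem_filter.mp this).2⟩
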